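/- Let n ≥ 9, m = ⌊√n⌋, S = {i² : 0 ≤ i ≤ m} ∪ {2}, and P(x) = 2·(−1)^{n−m−1}·(m!²/n!)·∏_{i ∈ [n]∖S} (x − i). Then ‖P‖₁ := ∑_{i=0}^{n} C(n,i)·|P(i)| < 27. -/

import Mathlib

open Finset

-- L4 generic
lemma aux_prod_abs (j n : ℕ) (h : j ≤ n) :
    ∏ i ∈ Finset.range (n+1) \ {j}, |(j:ℝ) - i| =
      (j.factorial : ℝ) * ((n-j).factorial : ℝ) := by
  have hsplit : Finset.range (n+1) \ {j} = Finset.range j ∪ Finset.Ico (j+1) (n+1) := by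
    ext i; simp [Finset.mem_range, Finset.mem_Ico]; omega
  have hdisj : Disjoint (Finset.range j) (Finset.Ico (j+1) (n+1)) := by
    simp [Finset.disjoint_left, Finset.mem_range, Finset.mem_Ico]; omega
  rw [hsplit, Finset.prod_union hdisj]
  have h1 : ∏ i ∈ Finset.range j, |(j:ℝ) - i| = j.factorial := by
    rw [← Finset.prod_range_reflect]
    rw [show (j.factorial : ℝ) = ∏ i ∈ Finset.range j, ((i:ℝ)+1) by
      rw [← Finset.prod_range_add_one_eq_factorial j]; push_cast; exact Finset.prod_congr rfl fun _ _ => by ring]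
    apply Finset.prod_congr rfl
    intro i hi
    simp only [Finset.mem_range] at hi
    have : ((j - 1 - i : ℕ) : ℝ) = (j:ℝ) - 1 - i := by
      push_cast [Nat.cast_sub (by omega : i ≤ j - 1), Nat.cast_sub (by omega : 1 ≤ j)]; ring
    rw [this]
    rw [abs_of_nonneg (by have := (Nat.cast_nonneg i : (0:ℝ) ≤ i); linarith : (0:ℝ) ≤ (j:ℝ) - ((j:ℝ)-1-i))]
    ring
  have h2 : ∏ i ∈ Finset.Ico (j+1) (n+1), |(j:ℝ) - i| = (n-j).factorial := by
    rw [Finset.prod_Ico_eq_prod_range]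
    have : n + 1 - (j+1) = n - j := by omega
    rw [this]
    rw [show ((n-j).factorial : ℝ) = ∏ i ∈ Finset.range (n-j), ((i:ℝ)+1) by
      rw [← Finset.prod_range_add_one_eq_factorial (n-j)]; push_cast; exact Finset.prod_congr rfl fun _ _ => by ring]
    apply Finset.prod_congr rfl
    intro i _
    rw [abs_of_nonpos (by push_cast; linarith : (j:ℝ) - ((j+1+i:ℕ):ℝ) ≤ 0)]
    push_cast; ring
  rw [h1, h2]

-- ∏_{k<m+1} (k0+k) related: (k0-1)! * ∏ = (k0+m)!
lemma asc_prod (k m : ℕ) (hk : 1 ≤ k) :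
    (k-1).factorial * ∏ i ∈ Finset.range (m+1), (k + i) = (k + m).factorial := by
  induction m with
  | zero =>
    simp only [Finset.prod_range_one, Nat.add_zero]
    obtain ⟨t, rfl⟩ : ∃ t, k = t + 1 := ⟨k - 1, by omega⟩
    simp [Nat.factorial_succ, Nat.mul_comm]
  | succ m ih =>
    rw [Finset.prod_range_succ, ← Nat.mul_assoc, ih, show k + (m+1) = (k+m) + 1 by ring,
      Nat.factorial_succ, Nat.mul_comm]

lemma fact_sq_le (m : ℕ) : ∀ k ≤ m, m.factorial * m.factorial ≤ (m-k).factorial * (m+k).factorial := by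
  intro k
  induction k with
  | zero => simp
  | succ k ih =>
    intro hk
    have h1 := ih (by omega)
    have e1 : m - k = (m - (k+1)) + 1 := by omega
    have e2 : (m-k).factorial = (m - k) * (m-(k+1)).factorial := by
      rw [e1, Nat.factorial_succ, ← e1]
    have e3 : (m+(k+1)).factorial = (m+k+1) * (m+k).factorial := by
      rw [show m+(k+1) = (m+k)+1 by ring, Nat.factorial_succ]
    calc m.factorial * m.factorial ≤ (m-k).factorial * (m+k).factorial := h1
      _ = (m-k) * ((m-(k+1)).factorial * (m+k).factorial) := by rw [e2]; ring
      _ ≤ (m+k+1) * ((m-(k+1)).factorial * (m+k).factorial) :=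
          Nat.mul_le_mul_right _ (by omega)
      _ = (m-(k+1)).factorial * (m+(k+1)).factorial := by rw [e3]; ring

lemma six_lemma (m : ℕ) (hm : 2 ≤ m) :
    (m+1) * (m.factorial)^2 ≤ 6 * (m-1) * ∏ k ∈ Finset.Icc 2 m, (k^2 - 2) := by
  induction m, hm using Nat.le_induction with
  | base => simp [Nat.factorial]
  | succ m hm ih =>
    obtain ⟨a, rfl⟩ : ∃ a, m = a + 1 := ⟨m - 1, by omega⟩
    rw [show Finset.Icc 2 (a+1+1) = insert (a+1+1) (Finset.Icc 2 (a+1)) by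
      rw [← Finset.insert_Icc_right_eq_Icc_add_one (by omega)]]
    rw [Finset.prod_insert (by simp)]
    have e : (a+1+1)^2 - 2 = a*a + 4*a + 2 := by
      have : (a+1+1)^2 = a*a+4*a+4 := by ring
      omega
    have e2 : ((a+1+1).factorial)^2 = (a+1+1)^2 * ((a+1).factorial)^2 := by
      rw [Nat.factorial_succ]; ring
    have e3 : a+1+1-1 = a+1 := by omega
    have e4 : a+1-1 = a := by omega
    rw [e, e2, e3]
    rw [e4] at ih
    set Q := ∏ k ∈ Finset.Icc 2 (a+1), (k^2-2) with hQ
    calc (a+1+1+1) * ((a+1+1)^2 * ((a+1).factorial)^2)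
        = (a+1+1+1)*(a+1+1) * ((a+1+1) * ((a+1).factorial)^2) := by ring
      _ ≤ (a+1+1+1)*(a+1+1) * (6*a*Q) := Nat.mul_le_mul_left _ ih
      _ = ((a+3)*(a+2)*a) * (6*Q) := by ring
      _ ≤ ((a+1)*(a*a+4*a+2)) * (6*Q) := by
          apply Nat.mul_le_mul_right; nlinarith
      _ = 6 * (a+1) * ((a*a+4*a+2) * Q) := by ring

lemma sq_diff_prod (m k0 : ℕ) (h1 : 1 ≤ k0) (h2 : k0 ≤ m) :
    2 * ∏ k ∈ Finset.range (m+1) \ {k0}, |((k0:ℝ))^2 - (k:ℝ)^2|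
      = ((m-k0).factorial : ℝ) * ((m+k0).factorial : ℝ) := by
  have hfac : ∀ k : ℕ, |((k0:ℝ))^2 - (k:ℝ)^2| = |(k0:ℝ) - k| * ((k0:ℝ) + k) := by
    intro k
    rw [show ((k0:ℝ))^2 - (k:ℝ)^2 = ((k0:ℝ) - k) * ((k0:ℝ)+k) by ring, abs_mul]
    congr 1
    exact abs_of_nonneg (by positivity)
  simp only [hfac]
  rw [Finset.prod_mul_distrib, aux_prod_abs k0 m h2]
  have hcast : ∏ k ∈ Finset.range (m+1) \ {k0}, ((k0:ℝ) + k)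
      = ((∏ k ∈ Finset.range (m+1) \ {k0}, (k0 + k) : ℕ) : ℝ) := by push_cast; rfl
  rw [hcast]
  set A := ∏ k ∈ Finset.range (m+1) \ {k0}, (k0 + k) with hA
  have hnat : (k0-1).factorial * (A * (k0 + k0)) = (k0+m).factorial := by
    rw [hA, ← Finset.prod_eq_prod_diff_singleton_mul
      (by simp only [Finset.mem_range]; omega : k0 ∈ Finset.range (m+1)) (fun k => k0 + k)]
    exact asc_prod k0 m h1
  obtain ⟨t, rfl⟩ : ∃ t, k0 = t + 1 := ⟨k0 - 1, by omega⟩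
  have hnat2 : 2 * ((t+1).factorial * A) = (t+1+m).factorial := by
    rw [← hnat]
    simp only [Nat.factorial_succ, Nat.add_sub_cancel]
    ring
  have hcast2 := congrArg (Nat.cast : ℕ → ℝ) hnat2
  push_cast at hcast2
  have : ((m + (t+1)).factorial : ℝ) = ((t+1+m).factorial : ℝ) := by rw [Nat.add_comm]
  rw [this]
  push_cast
  linear_combination ((m - (t+1)).factorial : ℝ) * hcast2

set_option maxHeartbeats 2000000 in
theorem P_l1_norm_lt (n : ℕ) (hn : 9 ≤ n) :
    let m := Nat.sqrt n
    let S : Finset ℕ := ((Finset.range (m + 1)).image (fun i => i ^ 2)) ∪ {2}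
    let P : ℝ → ℝ := fun x =>
      2 * (-1 : ℝ) ^ (n - m - 1) * ((Nat.factorial m : ℝ) ^ 2 / Nat.factorial n) *
        ∏ i ∈ Finset.range (n + 1) \ S, (x - i)
    ∑ i ∈ Finset.range (n + 1), (n.choose i : ℝ) * |P i| < 27 := by
  intro m S P
  have hm3 : 3 ≤ m := Nat.le_sqrt.mpr (by omega)
  have hm2n : m * m ≤ n := Nat.sqrt_le n
  have h2notsq : ∀ k : ℕ, k ^ 2 ≠ 2 := by
    intro k h
    rcases le_or_gt k 1 with hk | hk
    · have : k ^ 2 ≤ 1 ^ 2 := Nat.pow_le_pow_left hk 2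
      omega
    · have : 2 ^ 2 ≤ k ^ 2 := Nat.pow_le_pow_left hk 2
      omega
  have hinj : Function.Injective (fun i : ℕ => i ^ 2) :=
    Nat.pow_left_injective (by norm_num)
  set f : ℕ → ℝ := fun i => (n.choose i : ℝ) * |P i| with hf
  have hSsub : S ⊆ Finset.range (n + 1) := by
    intro i hi
    simp only [S, Finset.mem_union, Finset.mem_image, Finset.mem_singleton,
      Finset.mem_range] at hi ⊢
    rcases hi with ⟨k, hk, rfl⟩ | rfl
    · have h1 : k ^ 2 ≤ m ^ 2 := Nat.pow_le_pow_left (by omega) 2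
      have h2 : m ^ 2 = m * m := by ring
      omega
    · omega
  have hmem_sq : ∀ k ≤ m, k ^ 2 ∈ S := fun k hk =>
    Finset.mem_union_left _ (Finset.mem_image_of_mem _ (Finset.mem_range.mpr (by omega)))
  have h2S : (2 : ℕ) ∈ S := Finset.mem_union_right _ (Finset.mem_singleton_self 2)
  -- sum reduces to S
  have hsum : ∑ i ∈ Finset.range (n + 1), f i = ∑ i ∈ S, f i := by
    refine (Finset.sum_subset hSsub ?_).symm
    intro i hi hiS
    have hP0 : P i = 0 := by
      simp only [P]
      apply mul_eq_zero_of_right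
      exact Finset.prod_eq_zero (Finset.mem_sdiff.mpr ⟨hi, hiS⟩) (by simp)
    simp [hf, hP0]
  -- master identity
  have master : ∀ j ∈ S, f j = 2 * (m.factorial : ℝ) ^ 2 / ∏ i ∈ S \ {j}, |(j : ℝ) - (i : ℝ)| := by
    intro j hj
    have hjn : j ≤ n := by
      have := hSsub hj
      simpa [Nat.lt_succ_iff] using this
    have hDpos : (0 : ℝ) < ∏ i ∈ S \ {j}, |(j : ℝ) - (i : ℝ)| := by
      apply Finset.prod_pos
      intro i hi
      rw [abs_pos, sub_ne_zero]
      intro hji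
      exact (Finset.mem_sdiff.mp hi).2 (Finset.mem_singleton.mpr (Nat.cast_inj.mp hji.symm))
    rw [eq_div_iff (ne_of_gt hDpos)]
    have hunion : (Finset.range (n + 1) \ S) ∪ (S \ {j}) = Finset.range (n + 1) \ {j} :=
      Finset.sdiff_union_sdiff_cancel hSsub (Finset.singleton_subset_iff.mpr hj)
    have hdisj : Disjoint (Finset.range (n + 1) \ S) (S \ {j}) :=
      Finset.sdiff_disjoint.mono_right Finset.sdiff_subset
    have hprod : (∏ i ∈ Finset.range (n + 1) \ S, |(j : ℝ) - (i : ℝ)|) *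
        (∏ i ∈ S \ {j}, |(j : ℝ) - (i : ℝ)|) = (j.factorial : ℝ) * ((n - j).factorial : ℝ) := by
      rw [← Finset.prod_union hdisj, hunion]
      exact aux_prod_abs j n hjn
    have hP : |P j| = 2 * ((m.factorial : ℝ) ^ 2 / (n.factorial : ℝ)) *
        ∏ i ∈ Finset.range (n + 1) \ S, |(j : ℝ) - (i : ℝ)| := by
      simp only [P, abs_mul, Finset.abs_prod, abs_div, abs_pow, abs_neg, abs_one, one_pow,
        mul_one, abs_two, Nat.abs_cast, sq_abs]
    have hchoose : (n.choose j : ℝ) * (j.factorial : ℝ) * ((n - j).factorial : ℝ) = (n.factorial : ℝ) := by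
      exact_mod_cast congrArg (Nat.cast : ℕ → ℝ) (Nat.choose_mul_factorial_mul_factorial hjn)
    have hnfac : (n.factorial : ℝ) ≠ 0 := Nat.cast_ne_zero.mpr n.factorial_ne_zero
    simp only [hf]
    rw [hP]
    calc (n.choose j : ℝ) * (2 * ((m.factorial : ℝ) ^ 2 / (n.factorial : ℝ)) *
            ∏ i ∈ Finset.range (n + 1) \ S, |(j : ℝ) - (i : ℝ)|) *
          (∏ i ∈ S \ {j}, |(j : ℝ) - (i : ℝ)|)
        = 2 * ((m.factorial : ℝ) ^ 2 / (n.factorial : ℝ)) * ((n.choose j : ℝ) *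
            ((∏ i ∈ Finset.range (n + 1) \ S, |(j : ℝ) - (i : ℝ)|) *
             (∏ i ∈ S \ {j}, |(j : ℝ) - (i : ℝ)|))) := by ring
      _ = 2 * ((m.factorial : ℝ) ^ 2 / (n.factorial : ℝ)) * ((n.choose j : ℝ) *
            ((j.factorial : ℝ) * ((n - j).factorial : ℝ))) := by rw [hprod]
      _ = 2 * ((m.factorial : ℝ) ^ 2 / (n.factorial : ℝ)) * (n.factorial : ℝ) := by
            rw [← hchoose]; ring
      _ = 2 * (m.factorial : ℝ) ^ 2 := by field_simp
  -- set identities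
  have himg2 : (2 : ℕ) ∉ (Finset.range (m + 1)).image (fun i : ℕ => i ^ 2) := by
    intro h
    obtain ⟨k, -, hk⟩ := Finset.mem_image.mp h
    exact h2notsq k hk
  have hS2 : S \ {2} = (Finset.range (m + 1)).image (fun i : ℕ => i ^ 2) := by
    simp only [S]
    rw [Finset.union_sdiff_distrib, Finset.sdiff_self, Finset.union_empty,
      (Finset.sdiff_singleton_eq_erase _ _).trans (Finset.erase_eq_of_notMem himg2)]
  have hSk : ∀ k0 ≤ m, S \ {k0 ^ 2} =
      ((Finset.range (m + 1) \ {k0}).image (fun i : ℕ => i ^ 2)) ∪ {2} := by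
    intro k0 hk0
    simp only [S]
    rw [Finset.union_sdiff_distrib]
    congr 1
    · rw [Finset.image_sdiff _ _ hinj, Finset.image_singleton]
    · refine (Finset.sdiff_singleton_eq_erase _ _).trans (Finset.erase_eq_of_notMem ?_)
      simp only [Finset.mem_singleton]
      exact fun h => h2notsq k0 h
  have hdisj2 : ∀ k0 : ℕ, Disjoint ((Finset.range (m + 1) \ {k0}).image (fun i : ℕ => i ^ 2))
      ({2} : Finset ℕ) := by
    intro k0
    rw [Finset.disjoint_singleton_right]
    intro h
    exact himg2 (Finset.image_subset_image Finset.sdiff_subset h)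
  have hinjOn : ∀ (t : Finset ℕ), ∀ x ∈ t, ∀ y ∈ t, x ^ 2 = y ^ 2 → x = y :=
    fun t x _ y _ h => hinj h
  -- D at 0
  have hD0 : ∏ i ∈ S \ {0}, |((0 : ℕ) : ℝ) - (i : ℝ)| = 2 * (m.factorial : ℝ) ^ 2 := by
    rw [show ({0} : Finset ℕ) = {0 ^ 2} by norm_num, hSk 0 (by omega),
      Finset.prod_union (hdisj2 0), Finset.prod_image (hinjOn _), Finset.prod_singleton]
    have e1 : Finset.range (m + 1) \ {0} = Finset.Ico 1 (m + 1) := by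
      ext i
      simp only [Finset.mem_sdiff, Finset.mem_range, Finset.mem_singleton, Finset.mem_Ico]
      omega
    have e2 : ∏ k ∈ Finset.range (m + 1) \ {0}, |((0 : ℕ) : ℝ) - ((k ^ 2 : ℕ) : ℝ)|
        = ∏ k ∈ Finset.Ico 1 (m + 1), ((k : ℝ)) ^ 2 := by
      rw [e1]
      apply Finset.prod_congr rfl
      intro k _
      rw [Nat.cast_zero, zero_sub, abs_neg, Nat.abs_cast]
      push_cast
      ring
    have e3 : ∏ k ∈ Finset.Ico 1 (m + 1), ((k : ℝ)) ^ 2 = (m.factorial : ℝ) ^ 2 := by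
      rw [Finset.prod_pow]
      congr 1
      rw [← Nat.cast_prod, Finset.prod_Ico_id_eq_factorial]
    rw [e2, e3, Nat.cast_zero, Nat.cast_ofNat, zero_sub, abs_neg, abs_two]
    ring
  -- D at 2
  set N : ℕ := ∏ k ∈ Finset.Icc 2 m, (k ^ 2 - 2) with hN
  have hNpos : 0 < N := by
    rw [hN]
    apply Finset.prod_pos
    intro k hk
    have : 2 ≤ k := (Finset.mem_Icc.mp hk).1
    have : 2 ^ 2 ≤ k ^ 2 := Nat.pow_le_pow_left this 2
    omega
  have hD2 : ∏ i ∈ S \ {2}, |((2 : ℕ) : ℝ) - (i : ℝ)| = 2 * (N : ℝ) := by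
    rw [hS2, Finset.prod_image (hinjOn _), Finset.range_eq_Ico,
      ← Finset.prod_Ico_consecutive _ (show 0 ≤ 2 by omega) (show 2 ≤ m + 1 by omega)]
    have e1 : ∏ k ∈ Finset.Ico 0 2, |((2 : ℕ) : ℝ) - ((k ^ 2 : ℕ) : ℝ)| = 2 := by
      rw [show Finset.Ico 0 2 = {0, 1} by rfl]
      rw [Finset.prod_insert (by decide), Finset.prod_singleton]
      norm_num
    have e2 : ∏ k ∈ Finset.Ico 2 (m + 1), |((2 : ℕ) : ℝ) - ((k ^ 2 : ℕ) : ℝ)| = (N : ℝ) := by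
      rw [hN, ← Finset.Ico_add_one_right_eq_Icc, Nat.cast_prod]
      apply Finset.prod_congr rfl
      intro k hk
      have hk2 : 2 ≤ k := (Finset.mem_Ico.mp hk).1
      have hk4 : 4 ≤ k ^ 2 := by
        calc 4 = 2 ^ 2 := by norm_num
        _ ≤ k ^ 2 := Nat.pow_le_pow_left hk2 2
      rw [abs_of_nonpos (by
        have : (4 : ℝ) ≤ ((k ^ 2 : ℕ) : ℝ) := by exact_mod_cast hk4
        push_cast at this ⊢
        linarith)]
      push_cast [Nat.cast_sub (by omega : 2 ≤ k ^ 2)]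
      ring
    rw [e1, e2]
  -- D at k0^2, 1 ≤ k0 ≤ m
  have hDk : ∀ k0, 1 ≤ k0 → k0 ≤ m →
      ∏ i ∈ S \ {k0 ^ 2}, |((k0 ^ 2 : ℕ) : ℝ) - (i : ℝ)| =
        |((k0 : ℝ)) ^ 2 - 2| * ∏ k ∈ Finset.range (m + 1) \ {k0}, |((k0 : ℝ)) ^ 2 - (k : ℝ) ^ 2| := by
    intro k0 h1 h2
    rw [hSk k0 h2, Finset.prod_union (hdisj2 k0), Finset.prod_image (hinjOn _),
      Finset.prod_singleton]
    rw [mul_comm]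
    congr 1
    · push_cast
      ring_nf
    · apply Finset.prod_congr rfl
      intro k _
      push_cast
      ring_nf
  -- value bounds
  have hF0 : f 0 = 1 := by
    rw [master 0 (by simpa using hmem_sq 0 (Nat.zero_le m)), hD0]
    rw [div_self (by positivity)]
  have hF2 : f 2 ≤ 6 := by
    rw [master 2 h2S, hD2]
    rw [div_le_iff₀ (by positivity)]
    have h6 : m.factorial ^ 2 ≤ 6 * N := by
      have h := six_lemma m (by omega)
      have h3 : (m + 1) * m.factorial ^ 2 ≤ (m + 1) * (6 * N) := by
        calc (m + 1) * m.factorial ^ 2 ≤ 6 * (m - 1) * N := h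
          _ ≤ 6 * (m + 1) * N := Nat.mul_le_mul_right _ (by omega)
          _ = (m + 1) * (6 * N) := by ring
      exact Nat.le_of_mul_le_mul_left h3 (by omega)
    have h6' : ((m.factorial : ℝ)) ^ 2 ≤ 6 * (N : ℝ) := by exact_mod_cast h6
    linarith
  set u : ℕ → ℝ := fun i => if i = 0 then 8 else 4 / i with hu
  have hFk : ∀ i ∈ Finset.range m, f ((i + 1) ^ 2) ≤ u i - u (i + 1) := by
    intro i hi
    rw [Finset.mem_range] at hi
    set k0 := i + 1 with hk0
    have h1 : 1 ≤ k0 := by omega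
    have h2 : k0 ≤ m := by omega
    have hc1 : 1 ≤ |((k0 : ℝ)) ^ 2 - 2| := by
      rcases Nat.lt_or_ge k0 2 with h | h
      · have hk01 : k0 = 1 := by omega
        rw [hk01]
        norm_num
      · have h2r : (2 : ℝ) ≤ (k0 : ℝ) := by exact_mod_cast h
        rw [abs_of_nonneg (by nlinarith)]
        nlinarith
    have hcpos : (0 : ℝ) < |((k0 : ℝ)) ^ 2 - 2| := by linarith
    have hFle : f (k0 ^ 2) ≤ 4 / |((k0 : ℝ)) ^ 2 - 2| := by
      rw [master _ (hmem_sq k0 h2), hDk k0 h1 h2]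
      have h2R := sq_diff_prod m k0 h1 h2
      set R := ∏ k ∈ Finset.range (m + 1) \ {k0}, |((k0 : ℝ)) ^ 2 - (k : ℝ) ^ 2| with hR
      have hffpos : (0 : ℝ) < ((m - k0).factorial : ℝ) * ((m + k0).factorial : ℝ) := by positivity
      have hRpos : (0 : ℝ) < R := by linarith
      rw [div_le_div_iff₀ (by positivity) hcpos]
      have hfs : (m.factorial : ℝ) * (m.factorial : ℝ) ≤
          ((m - k0).factorial : ℝ) * ((m + k0).factorial : ℝ) := by
        exact_mod_cast fact_sq_le m k0 h2
      have hmul : |((k0 : ℝ)) ^ 2 - 2| * ((m.factorial : ℝ) * (m.factorial : ℝ)) ≤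
          |((k0 : ℝ)) ^ 2 - 2| * (((m - k0).factorial : ℝ) * ((m + k0).factorial : ℝ)) :=
        mul_le_mul_of_nonneg_left hfs (abs_nonneg _)
      calc 2 * (m.factorial : ℝ) ^ 2 * |((k0 : ℝ)) ^ 2 - 2|
          = 2 * (|((k0 : ℝ)) ^ 2 - 2| * ((m.factorial : ℝ) * (m.factorial : ℝ))) := by ring
        _ ≤ 2 * (|((k0 : ℝ)) ^ 2 - 2| * (((m - k0).factorial : ℝ) * ((m + k0).factorial : ℝ))) := by
            linarith
        _ = 2 * (|((k0 : ℝ)) ^ 2 - 2| * (2 * R)) := by rw [h2R]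
        _ = 4 * (|((k0 : ℝ)) ^ 2 - 2| * R) := by ring
    have hub : 4 / |((k0 : ℝ)) ^ 2 - 2| ≤ u i - u (i + 1) := by
      rcases Nat.eq_zero_or_pos i with rfl | hipos
      · simp only [hu, hk0]
        norm_num
      · have hi1 : (1 : ℝ) ≤ (i : ℝ) := by exact_mod_cast hipos
        have hk2 : (2 : ℝ) ≤ (k0 : ℝ) := by exact_mod_cast (by omega : 2 ≤ k0)
        rw [abs_of_nonneg (by nlinarith)]
        have hui : u i = 4 / (i : ℝ) := by
          simp only [hu]
          rw [if_neg (by omega)]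
        have hui1 : u (i + 1) = 4 / ((i : ℝ) + 1) := by
          simp only [hu]
          rw [if_neg (by omega)]
          push_cast
          ring
        rw [hui, hui1]
        have hkc : (k0 : ℝ) = (i : ℝ) + 1 := by rw [hk0]; push_cast; ring
        rw [hkc]
        have key : 4 / (i : ℝ) - 4 / ((i : ℝ) + 1) = 4 / ((i : ℝ) * ((i : ℝ) + 1)) := by
          field_simp
          ring
        have hip : (0 : ℝ) < (i : ℝ) := by linarith
        rw [key, div_le_div_iff₀ (by nlinarith) (by nlinarith)]
        nlinarith
    exact le_trans hFle hub
  -- assemble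
  have hsplit : ∑ i ∈ S, f i = (∑ k ∈ Finset.range (m + 1), f (k ^ 2)) + f 2 := by
    simp only [S]
    rw [Finset.sum_union (Finset.disjoint_singleton_right.mpr himg2), Finset.sum_singleton,
      Finset.sum_image (hinjOn _)]
  have hpeel : ∑ k ∈ Finset.range (m + 1), f (k ^ 2) =
      (∑ i ∈ Finset.range m, f ((i + 1) ^ 2)) + f (0 ^ 2) :=
    Finset.sum_range_succ' _ m
  have htel : ∑ i ∈ Finset.range m, (u i - u (i + 1)) = u 0 - u m :=
    Finset.sum_range_sub' u m
  have hsum_le : ∑ i ∈ Finset.range m, f ((i + 1) ^ 2) ≤ 8 := by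
    calc ∑ i ∈ Finset.range m, f ((i + 1) ^ 2) ≤ ∑ i ∈ Finset.range m, (u i - u (i + 1)) :=
          Finset.sum_le_sum hFk
      _ = u 0 - u m := htel
      _ ≤ 8 := by
          have hm0 : ¬ m = 0 := by omega
          simp only [hu, hm0, if_false, if_true, eq_self_iff_true]
          have : (0 : ℝ) ≤ 4 / (m : ℝ) := by positivity
          linarith
  show ∑ i ∈ Finset.range (n + 1), f i < 27
  rw [hsum, hsplit, hpeel, show (0 : ℕ) ^ 2 = 0 by norm_num, hF0]
  linarith
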